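/- arXiv:2410.12503 — 7 statements merged into one kernel-verified Lean document; each statement's English description precedes it below -/
import Mathlib

section
/- The I-density topology on ℝ is not separable: for every countable set C ⊆ ℝ there exists a nonempty member U of T_I with U ∩ C = ∅; consequently no countable subset of ℝ is dense in (ℝ, T_I). -/
open MeasureTheory Filter Set
open scoped ENNReal

noncomputable section

/-- A nontrivial admissible ideal of subsets of ℕ: closed under subsets and
finite unions, contains every finite set, and does not contain ℕ itself. -/
structure AdmissibleIdeal : Type where
  carrier : Set (Set ℕ)
  subset_mem : ∀ ⦃A B : Set ℕ⦄, A ∈ carrier → B ⊆ A → B ∈ carrier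
  union_mem : ∀ ⦃A B : Set ℕ⦄, A ∈ carrier → B ∈ carrier → A ∪ B ∈ carrier
  finite_mem : ∀ A : Set ℕ, A.Finite → A ∈ carrier
  univ_not_mem : (Set.univ : Set ℕ) ∉ carrier

/-- The filter F(I) = {M ⊆ ℕ : ℕ \ M ∈ I} associated with the ideal I. -/
def AdmissibleIdeal.filter (I : AdmissibleIdeal) : Filter ℕ :=
  Filter.comk (· ∈ I.carrier) (I.finite_mem ∅ Set.finite_empty)
    (fun _t ht _s hs => I.subset_mem ht hs)
    (fun _s hs _t ht => I.union_mem hs ht)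

/-- A sequence of closed intervals admissible about the point `p`:
each `J n` is a closed interval containing `p`, and
`{n : 0 < λ(J n) < 1/n} ∈ F(I)`. -/
def AdmissibleSeq (I : AdmissibleIdeal) (p : ℝ) (J : ℕ → Set ℝ) : Prop :=
  (∀ n, ∃ a b : ℝ, a ≤ b ∧ J n = Set.Icc a b) ∧ (∀ n, p ∈ J n) ∧
    {n : ℕ | 0 < volume (J n) ∧ volume (J n) < (n : ℝ≥0∞)⁻¹} ∈ I.filter

/-- The sequence n ↦ λ(E ∩ J n)/λ(J n) (interpreted as 0 when λ(J n) = 0). -/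
def ratioSeq (E : Set ℝ) (J : ℕ → Set ℝ) : ℕ → ℝ :=
  fun n => (volume (E ∩ J n) / volume (J n)).toReal

/-- Upper I-density of `E` at `p`: sup over admissible sequences of the
limsup along `F(I)` of the measure ratios. -/
def upperIDensity (I : AdmissibleIdeal) (p : ℝ) (E : Set ℝ) : ℝ :=
  sSup {l : ℝ | ∃ J : ℕ → Set ℝ, AdmissibleSeq I p J ∧
    l = Filter.limsup (ratioSeq E J) I.filter}

/-- Lower I-density of `E` at `p`: inf over admissible sequences of the
liminf along `F(I)` of the measure ratios. -/
def lowerIDensity (I : AdmissibleIdeal) (p : ℝ) (E : Set ℝ) : ℝ :=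
  sInf {l : ℝ | ∃ J : ℕ → Set ℝ, AdmissibleSeq I p J ∧
    l = Filter.liminf (ratioSeq E J) I.filter}

/-- `C` is a measurable cover of `A`. -/
def IsMeasurableCover (C A : Set ℝ) : Prop :=
  MeasurableSet C ∧ A ⊆ C ∧
    ∀ F : Set ℝ, MeasurableSet F → F ⊆ C \ A → volume F = 0

/-- `A` is I-sparse at `x`, i.e. `A ∈ S_I(x)`. -/
def ISparseAt (I : AdmissibleIdeal) (A : Set ℝ) (x : ℝ) : Prop :=
  ∀ B : Set ℝ, MeasurableSet B → upperIDensity I x B < 1 →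
    ∀ C : Set ℝ, IsMeasurableCover C A → upperIDensity I x (C ∪ B) < 1

/-- The I-density topology T_I. -/
def IDensityTopology (I : AdmissibleIdeal) : Set (Set ℝ) :=
  {E | MeasurableSet E ∧ ∀ x ∈ E, lowerIDensity I x E = 1}

/-- The I-sparse set topology 𝒰. -/
def sparseTop (I : AdmissibleIdeal) : Set (Set ℝ) :=
  {E | ∀ x ∈ E, ISparseAt I Eᶜ x}


lemma AdmissibleIdeal.filter_neBot (I : AdmissibleIdeal) : I.filter.NeBot := by
  rw [Filter.neBot_iff]
  intro h
  have h1 : (∅ : Set ℕ) ∈ I.filter := by simp [h]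
  have h2 : (Set.univ : Set ℕ) ∈ I.carrier := by
    simpa [AdmissibleIdeal.filter, Filter.mem_comk] using h1
  exact I.univ_not_mem h2

lemma liminf_ratio_eq_one (I : AdmissibleIdeal) (x : ℝ) (E : Set ℝ) (J : ℕ → Set ℝ)
    (hJ : AdmissibleSeq I x J) (hE : ∀ n, volume (E ∩ J n) = volume (J n)) :
    Filter.liminf (ratioSeq E J) I.filter = 1 := by
  haveI := I.filter_neBot
  have h : ∀ᶠ n in I.filter, ratioSeq E J n = 1 := by
    filter_upwards [hJ.2.2] with n hn
    obtain ⟨a, b, hab, hIcc⟩ := hJ.1 n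
    have htop : volume (J n) ≠ ⊤ := by
      rw [hIcc, Real.volume_Icc]; exact ENNReal.ofReal_ne_top
    have h0 : volume (J n) ≠ 0 := hn.1.ne'
    simp [ratioSeq, hE n, ENNReal.div_self h0 htop]
  rw [Filter.liminf_congr h, Filter.liminf_const]

lemma exists_admissibleSeq (I : AdmissibleIdeal) (x : ℝ) :
    AdmissibleSeq I x (fun n => Set.Icc x (x + ((2 * ((n : ℝ) + 1)))⁻¹)) := by
  have hpos : ∀ n : ℕ, (0:ℝ) < (2 * ((n : ℝ) + 1))⁻¹ := by
    intro n; positivity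
  refine ⟨fun n => ⟨x, x + (2 * ((n : ℝ) + 1))⁻¹, by linarith [hpos n], rfl⟩,
    fun n => ⟨le_refl x, by linarith [hpos n]⟩, ?_⟩
  apply Filter.univ_mem'
  intro n
  have hvol : volume (Set.Icc x (x + (2 * ((n : ℝ) + 1))⁻¹))
      = ENNReal.ofReal ((2 * ((n : ℝ) + 1))⁻¹) := by
    rw [Real.volume_Icc]; ring_nf
  constructor
  · rw [hvol]; exact ENNReal.ofReal_pos.2 (hpos n)
  · rw [hvol]
    rcases Nat.eq_zero_or_pos n with h0 | hn
    · subst h0; simp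
    · have hn' : (0:ℝ) < (n : ℝ) := by exact_mod_cast hn
      have heq : ((n : ℕ) : ℝ≥0∞)⁻¹ = ENNReal.ofReal ((n : ℝ)⁻¹) := by
        rw [ENNReal.ofReal_inv_of_pos hn', ENNReal.ofReal_natCast]
      rw [heq, ENNReal.ofReal_lt_ofReal_iff (by positivity)]
      rw [inv_lt_inv₀ (by positivity) hn']
      linarith

/-- The I-density topology is not separable: for every countable `C ⊆ ℝ` there is a
nonempty member of `T_I` disjoint from `C`; consequently no countable set is dense. -/
theorem IDensityTopology_not_separable (I : AdmissibleIdeal) (C : Set ℝ)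
    (hC : C.Countable) :
    ∃ U ∈ IDensityTopology I, U.Nonempty ∧ U ∩ C = ∅ := by
  have hCnull : volume C = 0 := hC.measure_zero volume
  have hE : ∀ J : ℕ → Set ℝ, ∀ n, volume (Cᶜ ∩ J n) = volume (J n) := by
    intro J n
    rw [Set.inter_comm, ← Set.diff_eq, measure_diff_null hCnull]
  refine ⟨Cᶜ, ⟨hC.measurableSet.compl, ?_⟩, ?_, by simp⟩
  · intro x hx
    have hS : {l : ℝ | ∃ J : ℕ → Set ℝ, AdmissibleSeq I x J ∧
        l = Filter.liminf (ratioSeq Cᶜ J) I.filter} = {1} := by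
      apply Set.Subset.antisymm
      · rintro l ⟨J, hJ, rfl⟩
        exact liminf_ratio_eq_one I x Cᶜ J hJ (hE J)
      · rintro l rfl
        exact ⟨_, exists_admissibleSeq I x,
          (liminf_ratio_eq_one I x Cᶜ _ (exists_admissibleSeq I x) (hE _)).symm⟩
    rw [lowerIDensity, hS, csInf_singleton]
  · rw [Set.nonempty_compl]
    intro h
    rw [h] at hC
    exact (Set.not_countable_univ (α := ℝ)) hC
end
end

section
/- If A ⊆ ℝ is Lebesgue measurable, x ∈ ℝ, and the upper I-density satisfies I-d⁻(x, A) = 0, then A is I-sparse at x, i.e. A ∈ S_I(x). -/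
open MeasureTheory Filter Set
open scoped ENNReal

noncomputable section

section Aux

lemma ratioSeq_nonneg (E : Set ℝ) (J : ℕ → Set ℝ) (n : ℕ) : 0 ≤ ratioSeq E J n :=
  ENNReal.toReal_nonneg

lemma ratio_div_le_one (E : Set ℝ) (J : Set ℝ) :
    volume (E ∩ J) / volume J ≤ 1 :=
  ENNReal.div_le_of_le_mul (by rw [one_mul]; exact measure_mono Set.inter_subset_right)

lemma ratioSeq_le_one (E : Set ℝ) (J : ℕ → Set ℝ) (n : ℕ) : ratioSeq E J n ≤ 1 := by
  have h := ratio_div_le_one E (J n)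
  have := ENNReal.toReal_mono ENNReal.one_ne_top h
  simpa [ratioSeq] using this

lemma ratioSeq_bddAbove (I : AdmissibleIdeal) (E : Set ℝ) (J : ℕ → Set ℝ) :
    I.filter.IsBoundedUnder (· ≤ ·) (ratioSeq E J) :=
  Filter.isBoundedUnder_of ⟨1, ratioSeq_le_one E J⟩

lemma ratioSeq_bddBelow (I : AdmissibleIdeal) (E : Set ℝ) (J : ℕ → Set ℝ) :
    I.filter.IsBoundedUnder (· ≥ ·) (ratioSeq E J) :=
  Filter.isBoundedUnder_of ⟨0, ratioSeq_nonneg E J⟩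

lemma ratioSeq_cobdd (I : AdmissibleIdeal) (E : Set ℝ) (J : ℕ → Set ℝ) :
    I.filter.IsCoboundedUnder (· ≤ ·) (ratioSeq E J) :=
  haveI := I.filter_neBot
  (ratioSeq_bddBelow I E J).isCoboundedUnder_le

lemma limsup_ratio_nonneg (I : AdmissibleIdeal) (E : Set ℝ) (J : ℕ → Set ℝ) :
    0 ≤ Filter.limsup (ratioSeq E J) I.filter := by
  haveI := I.filter_neBot
  apply le_limsup_of_frequently_le _ (ratioSeq_bddAbove I E J)
  exact Filter.Eventually.frequently (Filter.Eventually.of_forall (ratioSeq_nonneg E J))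

lemma limsup_ratio_le_one (I : AdmissibleIdeal) (E : Set ℝ) (J : ℕ → Set ℝ) :
    Filter.limsup (ratioSeq E J) I.filter ≤ 1 := by
  apply Filter.limsup_le_of_le (ratioSeq_cobdd I E J)
  exact Filter.Eventually.of_forall (ratioSeq_le_one E J)

lemma upperIDensity_bddAbove (I : AdmissibleIdeal) (p : ℝ) (E : Set ℝ) :
    BddAbove {l : ℝ | ∃ J : ℕ → Set ℝ, AdmissibleSeq I p J ∧
      l = Filter.limsup (ratioSeq E J) I.filter} := by
  refine ⟨1, ?_⟩
  rintro l ⟨J, _, rfl⟩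
  exact limsup_ratio_le_one I E J

lemma limsup_le_upperIDensity (I : AdmissibleIdeal) (p : ℝ) (E : Set ℝ)
    {J : ℕ → Set ℝ} (hJ : AdmissibleSeq I p J) :
    Filter.limsup (ratioSeq E J) I.filter ≤ upperIDensity I p E :=
  le_csSup (upperIDensity_bddAbove I p E) ⟨J, hJ, rfl⟩

lemma ratioSeq_union_le {A B C : Set ℝ} (hA : MeasurableSet A)
    (hC : IsMeasurableCover C A) (J : ℕ → Set ℝ) (n : ℕ) :
    ratioSeq (C ∪ B) J n ≤ ratioSeq A J n + ratioSeq B J n := by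
  have hCA : volume (C \ A) = 0 :=
    hC.2.2 (C \ A) (hC.1.diff hA) subset_rfl
  have hsub : (C ∪ B) ∩ J n ⊆ ((A ∩ J n) ∪ (B ∩ J n)) ∪ (C \ A) := by
    rintro y ⟨hy, hyJ⟩
    rcases hy with hyC | hyB
    · by_cases hyA : y ∈ A
      · exact Or.inl (Or.inl ⟨hyA, hyJ⟩)
      · exact Or.inr ⟨hyC, hyA⟩
    · exact Or.inl (Or.inr ⟨hyB, hyJ⟩)
  have hm : volume ((C ∪ B) ∩ J n) ≤ volume (A ∩ J n) + volume (B ∩ J n) :=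
    calc volume ((C ∪ B) ∩ J n) ≤ volume (((A ∩ J n) ∪ (B ∩ J n)) ∪ (C \ A)) :=
          measure_mono hsub
      _ ≤ volume ((A ∩ J n) ∪ (B ∩ J n)) + volume (C \ A) := measure_union_le _ _
      _ = volume ((A ∩ J n) ∪ (B ∩ J n)) := by rw [hCA, add_zero]
      _ ≤ volume (A ∩ J n) + volume (B ∩ J n) := measure_union_le _ _
  have hdiv : volume ((C ∪ B) ∩ J n) / volume (J n) ≤
      volume (A ∩ J n) / volume (J n) + volume (B ∩ J n) / volume (J n) := by
    rw [ENNReal.div_add_div_same]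
    exact ENNReal.div_le_div_right hm _
  have h1 : volume (A ∩ J n) / volume (J n) ≠ ⊤ :=
    ne_top_of_le_ne_top ENNReal.one_ne_top (ratio_div_le_one A (J n))
  have h2 : volume (B ∩ J n) / volume (J n) ≠ ⊤ :=
    ne_top_of_le_ne_top ENNReal.one_ne_top (ratio_div_le_one B (J n))
  have := ENNReal.toReal_mono (by exact ENNReal.add_ne_top.mpr ⟨h1, h2⟩) hdiv
  rw [ENNReal.toReal_add h1 h2] at this
  exact this

end Aux

/-- A measurable set of upper I-density zero at `x` is I-sparse at `x`. -/
theorem iSparseAt_of_upperIDensity_zero (I : AdmissibleIdeal) (A : Set ℝ) (x : ℝ)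
    (hA : MeasurableSet A) (h : upperIDensity I x A = 0) :
    ISparseAt I A x := by
  intro B hB hBlt C hC
  haveI := I.filter_neBot
  rcases Set.eq_empty_or_nonempty {l : ℝ | ∃ J : ℕ → Set ℝ, AdmissibleSeq I x J ∧
      l = Filter.limsup (ratioSeq (C ∪ B) J) I.filter} with hS | hS
  · rw [upperIDensity, hS, Real.sSup_empty]; norm_num
  · obtain ⟨l0, J0, hJ0, _⟩ := hS
    have hub0 : (0 : ℝ) ≤ upperIDensity I x B :=
      le_trans (limsup_ratio_nonneg I B J0) (limsup_le_upperIDensity I x B hJ0)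
    have hle : upperIDensity I x (C ∪ B) ≤ upperIDensity I x B := by
      apply Real.sSup_le _ hub0
      rintro l ⟨J, hJ, rfl⟩
      have key : Filter.limsup (ratioSeq (C ∪ B) J) I.filter ≤
          Filter.limsup (ratioSeq A J) I.filter + Filter.limsup (ratioSeq B J) I.filter := by
        have hbdd : I.filter.IsBoundedUnder (· ≤ ·) (ratioSeq A J + ratioSeq B J) :=
          Filter.isBoundedUnder_of ⟨2, fun n => by
            have h1 := ratioSeq_le_one A J n
            have h2 := ratioSeq_le_one B J n
            simp only [Pi.add_apply]; linarith⟩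
        have step1 : Filter.limsup (ratioSeq (C ∪ B) J) I.filter ≤
            Filter.limsup (ratioSeq A J + ratioSeq B J) I.filter :=
          Filter.limsup_le_limsup
            (Filter.Eventually.of_forall (fun n => ratioSeq_union_le hA hC J n))
            (ratioSeq_cobdd I _ J) hbdd
        exact le_trans step1 (limsup_add_le (ratioSeq_bddBelow I A J) (ratioSeq_bddAbove I A J)
            (ratioSeq_cobdd I B J) (ratioSeq_bddAbove I B J))
      have hA0 : Filter.limsup (ratioSeq A J) I.filter ≤ 0 :=
        h ▸ limsup_le_upperIDensity I x A hJ
      have hB0 : Filter.limsup (ratioSeq B J) I.filter ≤ upperIDensity I x B :=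
        limsup_le_upperIDensity I x B hJ
      linarith
    linarith
end
end

section
/- Let c > 1, and for n ≥ 1 set a_n = c^{−(n²+1)} and b_n = c^{−n²}, and let E = ⋃_{n≥1} (a_n, b_n). Then the upper right density of E at 0 satisfies limsup_{h→0⁺} λ(E ∩ (0,h))/h ≥ 1 − 1/c; in particular it is strictly positive, so 0 is not a dispersion point of E. -/
open MeasureTheory Filter Set
open scoped ENNReal

noncomputable section

/-- For `c > 1` and `E = ⋃_{n ≥ 1} (c^{-(n²+1)}, c^{-n²})`, the upper right density of `E`
at `0` is at least `1 - 1/c`, hence strictly positive. -/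
theorem sarkhel_example (c : ℝ) (hc : 1 < c) (E : Set ℝ)
    (hE : E = ⋃ n ∈ {n : ℕ | 1 ≤ n},
      Set.Ioo ((1 : ℝ) / c ^ (n ^ 2 + 1)) ((1 : ℝ) / c ^ (n ^ 2))) :
    1 - 1 / c ≤
      Filter.limsup (fun h : ℝ => (volume (E ∩ Set.Ioo 0 h)).toReal / h) (nhdsWithin 0 (Set.Ioi 0))
    ∧ 0 <
      Filter.limsup (fun h : ℝ => (volume (E ∩ Set.Ioo 0 h)).toReal / h)
        (nhdsWithin 0 (Set.Ioi 0)) := by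
  have hc0 : (0:ℝ) < c := lt_trans one_pos hc
  set f : ℝ → ℝ := fun h : ℝ => (volume (E ∩ Set.Ioo 0 h)).toReal / h with hf
  -- boundedness: f h ≤ 1 for h in Ioi 0
  have hbdd : IsBoundedUnder (· ≤ ·) (nhdsWithin 0 (Set.Ioi 0)) f := by
    refine ⟨1, eventually_map.2 ?_⟩
    filter_upwards [self_mem_nhdsWithin] with h (hh : 0 < h)
    have hvol : volume (E ∩ Set.Ioo 0 h) ≤ ENNReal.ofReal h := by
      calc volume (E ∩ Set.Ioo 0 h) ≤ volume (Set.Ioo 0 h) :=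
            measure_mono inter_subset_right
        _ = ENNReal.ofReal h := by rw [Real.volume_Ioo, sub_zero]
    have := ENNReal.toReal_mono (by simp) hvol
    rw [ENNReal.toReal_ofReal hh.le] at this
    simp only [hf]
    exact div_le_one_of_le₀ this hh.le
  -- the sequence b n = (c ^ ((n+1)^2))⁻¹
  set b : ℕ → ℝ := fun n => (c ^ ((n+1) ^ 2))⁻¹ with hb
  have hbpos : ∀ n, 0 < b n := fun n => inv_pos.2 (pow_pos hc0 _)
  have htend : Tendsto b atTop (nhdsWithin 0 (Set.Ioi 0)) := by
    apply tendsto_nhdsWithin_of_tendsto_nhds_of_eventually_within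
    · have h1 : Tendsto (fun n : ℕ => c ^ ((n+1)^2)) atTop atTop := by
        apply (tendsto_pow_atTop_atTop_of_one_lt hc).comp
        exact tendsto_atTop_mono
          (fun n => (Nat.le_add_right n 1).trans (Nat.le_self_pow two_ne_zero _)) tendsto_id
      exact tendsto_inv_atTop_zero.comp h1
    · exact Filter.Eventually.of_forall fun n => hbpos n
  -- key estimate: f (b n) ≥ 1 - 1/c
  have hkey : ∀ n, 1 - 1/c ≤ f (b n) := by
    intro n
    set m := (n+1)^2 with hm
    have hsub : Set.Ioo ((c ^ (m+1))⁻¹) (b n) ⊆ E ∩ Set.Ioo 0 (b n) := by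
      intro x hx
      constructor
      · rw [hE]
        refine Set.mem_biUnion (show n+1 ∈ {k : ℕ | 1 ≤ k} from Nat.le_add_left 1 n) ?_
        simpa [one_div, hm] using hx
      · exact ⟨lt_trans (inv_pos.2 (pow_pos hc0 _)) hx.1, hx.2⟩
    have hlow : ENNReal.ofReal (b n - (c ^ (m+1))⁻¹) ≤ volume (E ∩ Set.Ioo 0 (b n)) := by
      calc ENNReal.ofReal (b n - (c ^ (m+1))⁻¹) = volume (Set.Ioo ((c ^ (m+1))⁻¹) (b n)) := by
            rw [Real.volume_Ioo]
        _ ≤ _ := measure_mono hsub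
    have hup : volume (E ∩ Set.Ioo 0 (b n)) ≤ ENNReal.ofReal (b n) := by
      calc volume (E ∩ Set.Ioo 0 (b n)) ≤ volume (Set.Ioo 0 (b n)) :=
            measure_mono inter_subset_right
        _ = ENNReal.ofReal (b n) := by rw [Real.volume_Ioo, sub_zero]
    have hfin : volume (E ∩ Set.Ioo 0 (b n)) ≠ ⊤ :=
      ne_top_of_le_ne_top ENNReal.ofReal_ne_top hup
    have h1 : b n - (c ^ (m+1))⁻¹ ≤ (volume (E ∩ Set.Ioo 0 (b n))).toReal := by
      have := ENNReal.toReal_mono hfin hlow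
      have hnn : 0 ≤ b n - (c ^ (m+1))⁻¹ := by
        rw [sub_nonneg, hb]
        exact inv_anti₀ (pow_pos hc0 m) (pow_le_pow_right₀ hc.le (Nat.le_succ m))
      rwa [ENNReal.toReal_ofReal hnn] at this
    have h2 : (b n - (c ^ (m+1))⁻¹) / b n = 1 - 1/c := by
      rw [sub_div, div_self (hbpos n).ne']
      congr 1
      rw [hb]
      field_simp
      ring
    simp only [hf]
    rw [← h2]
    gcongr
  have hfreq : ∃ᶠ h in nhdsWithin 0 (Set.Ioi 0), 1 - 1/c ≤ f h :=
    htend.frequently (Frequently.of_forall hkey)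
  have hmain : 1 - 1/c ≤ Filter.limsup f (nhdsWithin 0 (Set.Ioi 0)) :=
    le_limsup_of_frequently_le hfreq hbdd
  exact ⟨hmain, lt_of_lt_of_le (sub_pos.2 ((div_lt_one hc0).2 hc)) hmain⟩
end
end

section
/- If E₁ ⊆ ℝ and E₂ ⊆ ℝ are both I-sparse at x ∈ ℝ, then E₁ ∪ E₂ is I-sparse at x; that is, S_I(x) is closed under finite unions. -/
open MeasureTheory Filter Set
open scoped ENNReal

noncomputable section

/-- S_I(x) is closed under finite unions. -/
theorem iSparseAt_union (I : AdmissibleIdeal) (E₁ E₂ : Set ℝ) (x : ℝ)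
    (h₁ : ISparseAt I E₁ x) (h₂ : ISparseAt I E₂ x) :
    ISparseAt I (E₁ ∪ E₂) x := by
  intro B hB hBlt C hC
  obtain ⟨hCm, hsub, hnull⟩ := hC
  set T₁ := toMeasurable volume E₁ with hT₁
  set T₂ := toMeasurable volume E₂ with hT₂
  have hE₁C : E₁ ⊆ C := fun y hy => hsub (Or.inl hy)
  have hE₂C : E₂ ⊆ C := fun y hy => hsub (Or.inr hy)
  set C₁ : Set ℝ := T₁ ∩ C with hC₁def
  set R : Set ℝ := C \ (T₁ ∪ T₂) with hRdef
  set C₂ : Set ℝ := (T₂ ∩ C) ∪ R with hC₂def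
  have hT₁m : MeasurableSet T₁ := measurableSet_toMeasurable _ _
  have hT₂m : MeasurableSet T₂ := measurableSet_toMeasurable _ _
  have hC₁m : MeasurableSet C₁ := hT₁m.inter hCm
  have hRm : MeasurableSet R := hCm.diff (hT₁m.union hT₂m)
  have hC₂m : MeasurableSet C₂ := (hT₂m.inter hCm).union hRm
  have hcov₁ : IsMeasurableCover C₁ E₁ := by
    refine ⟨hC₁m, fun y hy => ⟨subset_toMeasurable _ _ hy, hE₁C hy⟩, fun F hF hFsub => ?_⟩
    have h1 : volume (T₁ ∩ F) = volume (E₁ ∩ F) :=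
      Measure.measure_toMeasurable_inter_of_sFinite hF E₁
    have h2 : T₁ ∩ F = F := Set.inter_eq_self_of_subset_right
      (fun y hy => (hFsub hy).1.1)
    have h3 : E₁ ∩ F = ∅ := by
      ext y; simp only [Set.mem_inter_iff, Set.mem_empty_iff_false, iff_false]
      rintro ⟨hyE, hyF⟩; exact (hFsub hyF).2 hyE
    rw [h2, h3] at h1; simpa using h1
  have hcov₂ : IsMeasurableCover C₂ E₂ := by
    refine ⟨hC₂m, fun y hy => Or.inl ⟨subset_toMeasurable _ _ hy, hE₂C hy⟩,
      fun F hF hFsub => ?_⟩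
    have hsplit : F = (F ∩ (T₂ ∩ C)) ∪ (F ∩ R) := by
      ext y; simp only [Set.mem_union, Set.mem_inter_iff]
      constructor
      · intro hy
        rcases (hFsub hy).1 with h | h
        · exact Or.inl ⟨hy, h⟩
        · exact Or.inr ⟨hy, h⟩
      · rintro (⟨hy, _⟩ | ⟨hy, _⟩) <;> exact hy
    have hFR : volume (F ∩ R) = 0 := by
      refine hnull _ (hF.inter hRm) ?_
      intro y hy
      refine ⟨hy.2.1, ?_⟩
      rintro (hE | hE)
      · exact hy.2.2 (Or.inl (subset_toMeasurable _ _ hE))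
      · exact hy.2.2 (Or.inr (subset_toMeasurable _ _ hE))
    have hFT : volume (F ∩ (T₂ ∩ C)) = 0 := by
      have h1 : volume (T₂ ∩ (F ∩ (T₂ ∩ C))) = volume (E₂ ∩ (F ∩ (T₂ ∩ C))) :=
        Measure.measure_toMeasurable_inter_of_sFinite (hF.inter (hT₂m.inter hCm)) E₂
      have h2 : T₂ ∩ (F ∩ (T₂ ∩ C)) = F ∩ (T₂ ∩ C) := by
        ext y; simp only [Set.mem_inter_iff]; tauto
      have h3 : E₂ ∩ (F ∩ (T₂ ∩ C)) = ∅ := by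
        ext y; simp only [Set.mem_inter_iff, Set.mem_empty_iff_false, iff_false]
        rintro ⟨hyE, hyF, _⟩; exact (hFsub hyF).2 hyE
      rw [h2, h3] at h1; simpa using h1
    have hle := measure_union_le (μ := volume) (F ∩ (T₂ ∩ C)) (F ∩ R)
    rw [← hsplit] at hle
    exact le_antisymm (by simpa [hFT, hFR] using hle) zero_le
  have step1 : upperIDensity I x (C₁ ∪ B) < 1 := h₁ B hB hBlt C₁ hcov₁
  have step2 : upperIDensity I x (C₂ ∪ (C₁ ∪ B)) < 1 :=
    h₂ (C₁ ∪ B) (hC₁m.union hB) step1 C₂ hcov₂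
  have heq : C₂ ∪ (C₁ ∪ B) = C ∪ B := by
    ext y
    simp only [hC₂def, hC₁def, hRdef, Set.mem_union, Set.mem_inter_iff, Set.mem_diff]
    tauto
  rwa [heq] at step2
end
end

section
/- The I-sparse set topology is Hausdorff: for any two distinct points x, y ∈ ℝ there exist U, V ∈ 𝒰 with x ∈ U, y ∈ V and U ∩ V = ∅. -/
open MeasureTheory Filter Set
open scoped ENNReal

noncomputable section

lemma cofinite_mem_ideal_filter (I : AdmissibleIdeal) {M : Set ℕ} (h : Mᶜ.Finite) :
    M ∈ I.filter := I.finite_mem _ h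

lemma ratioSeq_congr_of_null {B C : Set ℝ} {J : Set ℝ} (N : Set ℝ)
    (hN : volume N = 0) (hsub : C ∩ J ⊆ N) :
    (volume ((C ∪ B) ∩ J) / volume J).toReal = (volume (B ∩ J) / volume J).toReal := by
  have h1 : volume ((C ∪ B) ∩ J) ≤ volume (B ∩ J) := by
    have hss : (C ∪ B) ∩ J ⊆ N ∪ (B ∩ J) := by
      rintro z ⟨hz | hz, hzJ⟩
      · exact Or.inl (hsub ⟨hz, hzJ⟩)
      · exact Or.inr ⟨hz, hzJ⟩
    calc volume ((C ∪ B) ∩ J) ≤ volume (N ∪ (B ∩ J)) := measure_mono hss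
      _ ≤ volume N + volume (B ∩ J) := measure_union_le _ _
      _ = volume (B ∩ J) := by rw [hN, zero_add]
  have h2 : volume (B ∩ J) ≤ volume ((C ∪ B) ∩ J) :=
    measure_mono (Set.inter_subset_inter_left _ Set.subset_union_right)
  rw [le_antisymm h1 h2]

lemma limsup_ratio_eq (I : AdmissibleIdeal) {E : Set ℝ} (hE : IsOpen E)
    {x : ℝ} (hx : x ∈ E) (B C : Set ℝ) (N : Set ℝ) (hN : volume N = 0)
    (hCE : C ∩ E ⊆ N) {J : ℕ → Set ℝ} (hJ : AdmissibleSeq I x J) :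
    Filter.limsup (ratioSeq (C ∪ B) J) I.filter
      = Filter.limsup (ratioSeq B J) I.filter := by
  obtain ⟨δ, hδ, hball⟩ := Metric.isOpen_iff.1 hE x hx
  obtain ⟨hIcc, hmem, hfil⟩ := hJ
  have hcof : {n : ℕ | δ⁻¹ < (n : ℝ)} ∈ I.filter := by
    apply cofinite_mem_ideal_filter
    apply (Set.finite_Iic (⌈δ⁻¹⌉₊)).subset
    intro n hn
    simp only [Set.mem_compl_iff, Set.mem_setOf_eq, not_lt] at hn
    exact Set.mem_Iic.2 (by exact_mod_cast hn.trans (Nat.le_ceil _))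
  have hev : ∀ᶠ n in I.filter, ratioSeq (C ∪ B) J n = ratioSeq B J n := by
    filter_upwards [hfil, hcof] with n hn hn'
    have hnpos : (0 : ℝ) < n := lt_of_le_of_lt (le_of_lt (inv_pos.2 hδ)) hn'
    have hJE : J n ⊆ E := by
      obtain ⟨a, b, hab, hJn⟩ := hIcc n
      have hlen : b - a < δ := by
        have hv : volume (J n) < (n : ℝ≥0∞)⁻¹ := hn.2
        rw [hJn, Real.volume_Icc] at hv
        have hinv : ((n : ℝ≥0∞))⁻¹ ≤ ENNReal.ofReal δ := by
          rw [ENNReal.inv_le_iff_inv_le, ← ENNReal.ofReal_natCast,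
            ← ENNReal.ofReal_inv_of_pos hδ]
          exact ENNReal.ofReal_le_ofReal (le_of_lt hn')
        have := lt_of_lt_of_le hv hinv
        exact (ENNReal.ofReal_lt_ofReal_iff hδ).1 this
      rw [hJn]
      intro z hz
      have hxm := hmem n
      rw [hJn] at hxm
      apply hball
      rw [Metric.mem_ball, Real.dist_eq, abs_sub_lt_iff]
      constructor
      · linarith [hz.1, hz.2, hxm.1, hxm.2]
      · linarith [hz.1, hz.2, hxm.1, hxm.2]
    exact ratioSeq_congr_of_null N hN (fun z hz => hCE ⟨hz.1, hJE hz.2⟩)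
  exact Filter.limsup_congr hev

lemma isOpen_mem_sparseTop (I : AdmissibleIdeal) {E : Set ℝ}
    (hE : IsOpen E) : E ∈ sparseTop I := by
  intro x hx B _hB hBlt C hC
  have hN : volume (C ∩ E) = 0 := by
    apply hC.2.2 (C ∩ E) (hC.1.inter hE.measurableSet)
    intro z hz
    exact ⟨hz.1, fun h => h hz.2⟩
  have : upperIDensity I x (C ∪ B) = upperIDensity I x B := by
    unfold upperIDensity
    congr 1
    ext l
    constructor
    · rintro ⟨J, hJ, rfl⟩
      exact ⟨J, hJ, limsup_ratio_eq I hE hx B C (C ∩ E) hN (fun z hz => hz) hJ⟩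
    · rintro ⟨J, hJ, rfl⟩
      exact ⟨J, hJ, (limsup_ratio_eq I hE hx B C (C ∩ E) hN (fun z hz => hz) hJ).symm⟩
  rw [this]
  exact hBlt

/-- The I-sparse set topology is Hausdorff. -/
theorem sparseTop_hausdorff (I : AdmissibleIdeal) (x y : ℝ) (hxy : x ≠ y) :
    ∃ U ∈ sparseTop I, ∃ V ∈ sparseTop I, x ∈ U ∧ y ∈ V ∧ U ∩ V = ∅ := by
  refine ⟨Metric.ball x (dist x y / 2), isOpen_mem_sparseTop I Metric.isOpen_ball,
    Metric.ball y (dist x y / 2), isOpen_mem_sparseTop I Metric.isOpen_ball,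
    Metric.mem_ball_self (half_pos (dist_pos.2 hxy)),
    Metric.mem_ball_self (half_pos (dist_pos.2 hxy)), ?_⟩
  ext z
  simp only [Set.mem_inter_iff, Metric.mem_ball, Set.mem_empty_iff_false, iff_false, not_and]
  intro h1 h2
  linarith [dist_triangle x z y, dist_comm z x, dist_comm z y]
end
end

section
/- The I-sparse set topology is not separable: for every countable set C ⊆ ℝ there exists a nonempty member U of 𝒰 with U ∩ C = ∅; consequently no countable subset of ℝ is dense in (ℝ, 𝒰). -/
open MeasureTheory Filter Set
open scoped ENNReal

noncomputable section

/-- The I-sparse set topology is not separable: every countable `C ⊆ ℝ` misses some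
nonempty member of 𝒰; consequently no countable set is dense in `(ℝ, 𝒰)`. -/
theorem sparseTop_not_separable (I : AdmissibleIdeal) (C : Set ℝ)
    (hC : C.Countable) :
    ∃ U ∈ sparseTop I, U.Nonempty ∧ U ∩ C = ∅ := by
  refine ⟨Cᶜ, ?_, ?_, by ext x; simp⟩
  · intro x _ B _ hBd C' hC'
    have hCnull : volume C = 0 := hC.measure_zero _
    have hCm : MeasurableSet C := hC.measurableSet
    have hnull : volume C' = 0 := by
      have hsub : C' \ C ⊆ C' \ Cᶜᶜ := by rw [compl_compl]
      have h0 : volume (C' \ C) = 0 :=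
        hC'.2.2 _ (hC'.1.diff hCm) hsub
      have : volume C' ≤ volume C + volume (C' \ C) := by
        refine le_trans (measure_mono ?_) (measure_union_le _ _)
        intro y hy
        by_cases h : y ∈ C
        · exact Or.inl h
        · exact Or.inr ⟨hy, h⟩
      simpa [hCnull, h0] using this
    have key : upperIDensity I x (C' ∪ B) = upperIDensity I x B := by
      unfold upperIDensity
      congr 1
      ext l
      have hr : ∀ J : ℕ → Set ℝ, ratioSeq (C' ∪ B) J = ratioSeq B J := by
        intro J
        funext n
        unfold ratioSeq
        have : volume ((C' ∪ B) ∩ J n) = volume (B ∩ J n) := by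
          rw [union_inter_distrib_right]
          have h1 : volume (C' ∩ J n) = 0 :=
            le_antisymm (le_trans (measure_mono inter_subset_left) hnull.le)
              zero_le
          exact le_antisymm
            (by simpa [h1] using measure_union_le (μ := volume) (C' ∩ J n) (B ∩ J n))
            (measure_mono subset_union_right)
        rw [this]
      simp only [mem_setOf_eq, hr]
    rw [key]
    exact hBd
  · rw [nonempty_compl]
    intro h
    subst h
    exact (Cardinal.not_countable_real) hC
end
end

section
/- Let A ⊆ ℝ be Lebesgue measurable and set G = {x ∈ A : ℝ \ A is I-sparse at x}. Then G is the interior of A in the I-sparse set topology: G ∈ 𝒰, G ⊆ A, and every V ∈ 𝒰 with V ⊆ A satisfies V ⊆ G. -/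
open MeasureTheory Filter Set
open scoped ENNReal

noncomputable section

namespace SparseHelpers

variable (I : AdmissibleIdeal)

lemma filter_neBot : I.filter.NeBot := by
  refine Filter.neBot_iff.mpr (fun h => I.univ_not_mem ?_)
  have h0 : (∅ : Set ℕ) ∈ I.filter := by rw [h]; exact Filter.mem_bot
  simpa [AdmissibleIdeal.filter, Filter.mem_comk] using h0

lemma filter_le_cofinite : I.filter ≤ Filter.cofinite := by
  intro s hs
  have : sᶜ ∈ I.carrier := I.finite_mem _ hs
  simpa [AdmissibleIdeal.filter, Filter.mem_comk] using this

lemma ennratio_le_one (E : Set ℝ) (J : ℕ → Set ℝ) (n : ℕ) :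
    volume (E ∩ J n) / volume (J n) ≤ 1 :=
  ENNReal.div_le_of_le_mul (by simpa using measure_mono (inter_subset_right : E ∩ J n ⊆ J n))

lemma ennratio_ne_top (E : Set ℝ) (J : ℕ → Set ℝ) (n : ℕ) :
    volume (E ∩ J n) / volume (J n) ≠ ∞ :=
  ne_top_of_le_ne_top ENNReal.one_ne_top (ennratio_le_one E J n)

lemma ratio_nonneg (E : Set ℝ) (J : ℕ → Set ℝ) (n : ℕ) : 0 ≤ ratioSeq E J n :=
  ENNReal.toReal_nonneg

lemma ratio_le_one (E : Set ℝ) (J : ℕ → Set ℝ) (n : ℕ) : ratioSeq E J n ≤ 1 := by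
  have h := ENNReal.toReal_mono ENNReal.one_ne_top (ennratio_le_one E J n)
  rw [ENNReal.toReal_one] at h
  exact h

lemma ratio_mono_null {D E : Set ℝ} (h : volume (D \ E) = 0) (J : ℕ → Set ℝ) (n : ℕ) :
    ratioSeq D J n ≤ ratioSeq E J n := by
  have hv : volume (D ∩ J n) ≤ volume (E ∩ J n) := by
    calc volume (D ∩ J n) ≤ volume ((E ∩ J n) ∪ (D \ E)) := by
          refine measure_mono (fun y hy => ?_)
          by_cases hyE : y ∈ E
          · exact Or.inl ⟨hyE, hy.2⟩
          · exact Or.inr ⟨hy.1, hyE⟩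
      _ ≤ volume (E ∩ J n) + volume (D \ E) := measure_union_le _ _
      _ = volume (E ∩ J n) := by rw [h, add_zero]
  exact ENNReal.toReal_mono (ennratio_ne_top E J n) (ENNReal.div_le_div_right hv _)

lemma ratio_union_le (E F : Set ℝ) (J : ℕ → Set ℝ) (n : ℕ) :
    ratioSeq (E ∪ F) J n ≤ ratioSeq E J n + ratioSeq F J n := by
  unfold ratioSeq
  rw [← ENNReal.toReal_add (ennratio_ne_top E J n) (ennratio_ne_top F J n)]
  refine ENNReal.toReal_mono (by
    exact ENNReal.add_ne_top.mpr ⟨ennratio_ne_top E J n, ennratio_ne_top F J n⟩) ?_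
  calc volume ((E ∪ F) ∩ J n) / volume (J n)
      ≤ (volume (E ∩ J n) + volume (F ∩ J n)) / volume (J n) := by
        refine ENNReal.div_le_div_right ?_ _
        rw [union_inter_distrib_right]
        exact measure_union_le _ _
    _ = volume (E ∩ J n) / volume (J n) + volume (F ∩ J n) / volume (J n) :=
        ENNReal.div_add_div_same.symm

lemma isBounded (E : Set ℝ) (J : ℕ → Set ℝ) :
    I.filter.IsBoundedUnder (· ≤ ·) (ratioSeq E J) :=
  Filter.isBoundedUnder_of ⟨1, fun n => ratio_le_one E J n⟩

lemma isCobounded (E : Set ℝ) (J : ℕ → Set ℝ) :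
    I.filter.IsCoboundedUnder (· ≤ ·) (ratioSeq E J) :=
  haveI := filter_neBot I
  Filter.IsBoundedUnder.isCoboundedUnder_le
    (Filter.isBoundedUnder_of ⟨0, fun n => ratio_nonneg E J n⟩)

lemma limsup_nonneg (E : Set ℝ) (J : ℕ → Set ℝ) :
    0 ≤ Filter.limsup (ratioSeq E J) I.filter :=
  haveI := filter_neBot I
  Filter.le_limsup_of_frequently_le
    (Filter.Frequently.of_forall (fun n => ratio_nonneg E J n)) (isBounded I E J)

lemma limsup_le_one (E : Set ℝ) (J : ℕ → Set ℝ) :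
    Filter.limsup (ratioSeq E J) I.filter ≤ 1 :=
  Filter.limsup_le_of_le (isCobounded I E J)
    (Filter.Eventually.of_forall (fun n => ratio_le_one E J n))

lemma bddAbove_S (x : ℝ) (E : Set ℝ) :
    BddAbove {l : ℝ | ∃ J : ℕ → Set ℝ, AdmissibleSeq I x J ∧
      l = Filter.limsup (ratioSeq E J) I.filter} := by
  refine ⟨1, ?_⟩
  rintro l ⟨J, hJ, rfl⟩
  exact limsup_le_one I E J

lemma uD_nonneg (x : ℝ) (E : Set ℝ) : 0 ≤ upperIDensity I x E := by
  refine Real.sSup_nonneg ?_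
  rintro l ⟨J, hJ, rfl⟩
  exact limsup_nonneg I E J

lemma uD_mono_null {D E : Set ℝ} (h : volume (D \ E) = 0) (x : ℝ) :
    upperIDensity I x D ≤ upperIDensity I x E := by
  refine Real.sSup_le ?_ (uD_nonneg I x E)
  rintro l ⟨J, hJ, rfl⟩
  refine le_trans (Filter.limsup_le_limsup
    (Filter.Eventually.of_forall (fun n => ratio_mono_null h J n))
    (isCobounded I D J) (isBounded I E J)) ?_
  exact le_csSup (bddAbove_S I x E) ⟨J, hJ, rfl⟩

lemma my_le_of_forall_pos {a b : ℝ} (h : ∀ ε : ℝ, 0 < ε → a ≤ b + ε) : a ≤ b := by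
  by_contra hc
  push_neg at hc
  have := h ((a - b) / 2) (by linarith)
  linarith

/-- Key analytic estimate: at a (closed-ball) density point of `A`, the relative measure
of `Aᶜ` in the intervals of any admissible sequence is eventually small along `F(I)`. -/
lemma eventually_ratio_compl_small {A : Set ℝ} (hA : MeasurableSet A) {x : ℝ}
    (hx : Filter.Tendsto
      (fun r => volume (A ∩ Metric.closedBall x r) / volume (Metric.closedBall x r))
      (nhdsWithin 0 (Ioi 0)) (nhds 1))
    {J : ℕ → Set ℝ} (hJ : AdmissibleSeq I x J) {ε : ℝ} (hε : 0 < ε) :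
    ∀ᶠ n in I.filter, ratioSeq Aᶜ J n ≤ ε := by
  set ε' : ℝ≥0∞ := ENNReal.ofReal (ε / 2) with hε'def
  have hε'0 : ε' ≠ 0 := by
    simp only [hε'def, ne_eq, ENNReal.ofReal_eq_zero, not_le]
    linarith
  have h1 : ∀ᶠ r in nhdsWithin (0:ℝ) (Ioi 0),
      1 - ε' < volume (A ∩ Metric.closedBall x r) / volume (Metric.closedBall x r) :=
    hx.eventually (eventually_gt_nhds
      (ENNReal.sub_lt_self ENNReal.one_ne_top one_ne_zero hε'0))
  rw [Filter.eventually_iff, mem_nhdsGT_iff_exists_Ioo_subset] at h1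
  obtain ⟨δ, hδpos, hδ⟩ := h1
  have hδ0 : (0:ℝ) < δ := hδpos
  have key : ∀ r : ℝ, 0 < r → r < δ →
      volume (Aᶜ ∩ Metric.closedBall x r) ≤ ε' * volume (Metric.closedBall x r) := by
    intro r h0 hr
    have hball := hδ ⟨h0, hr⟩
    set b := volume (Metric.closedBall x r) with hb
    have hbne : b ≠ 0 := by
      rw [hb, Real.volume_closedBall]
      exact (ENNReal.ofReal_pos.mpr (by linarith)).ne'
    have hbtop : b ≠ ∞ := by rw [hb, Real.volume_closedBall]; exact ENNReal.ofReal_ne_top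
    have h2 : (1 - ε') * b ≤ volume (A ∩ Metric.closedBall x r) := by
      have h2' := mul_le_mul_left (le_of_lt hball) b
      rwa [ENNReal.div_mul_cancel hbne hbtop] at h2'
    have hsplit : volume (A ∩ Metric.closedBall x r) + volume (Aᶜ ∩ Metric.closedBall x r)
        = b := by
      rw [inter_comm A, inter_comm Aᶜ, ← Set.diff_eq]
      exact measure_inter_add_diff _ hA
    have hAtop : volume (A ∩ Metric.closedBall x r) ≠ ∞ := by
      refine ne_top_of_le_ne_top hbtop ?_
      rw [hb]
      exact measure_mono inter_subset_right
    have h3 : volume (Aᶜ ∩ Metric.closedBall x r) ≤ b - (1 - ε') * b := by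
      have heq : volume (Aᶜ ∩ Metric.closedBall x r)
          = b - volume (A ∩ Metric.closedBall x r) :=
        ENNReal.eq_sub_of_add_eq hAtop (by rw [add_comm]; exact hsplit)
      rw [heq]
      exact tsub_le_tsub_left h2 b
    have h4 : b - (1 - ε') * b ≤ ε' * b := by
      rw [tsub_le_iff_right]
      calc b = 1 * b := (one_mul b).symm
        _ ≤ (ε' + (1 - ε')) * b := mul_le_mul_left le_add_tsub b
        _ = ε' * b + (1 - ε') * b := add_mul _ _ _
    exact h3.trans h4
  have hN : ∀ᶠ (n : ℕ) in I.filter, (n : ℝ≥0∞)⁻¹ ≤ ENNReal.ofReal (δ / 2) := by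
    have h5 : ∀ᶠ (n : ℕ) in Filter.atTop, (n : ℝ≥0∞)⁻¹ ≤ ENNReal.ofReal (δ / 2) :=
      ENNReal.tendsto_inv_nat_nhds_zero.eventually
        (eventually_le_nhds (ENNReal.ofReal_pos.mpr (by linarith)))
    exact h5.filter_mono ((filter_le_cofinite I).trans (le_of_eq Nat.cofinite_eq_atTop))
  have hS : ∀ᶠ n in I.filter,
      0 < volume (J n) ∧ volume (J n) < (n : ℝ≥0∞)⁻¹ := hJ.2.2
  filter_upwards [hS, hN] with n hn hninv
  obtain ⟨a, b', hab, hEq⟩ := hJ.1 n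
  have hxmem := hJ.2.1 n
  rw [hEq] at hxmem
  have hvol : volume (J n) = ENNReal.ofReal (b' - a) := by rw [hEq, Real.volume_Icc]
  have hrpos : 0 < b' - a := by
    have hp := hn.1
    rw [hvol] at hp
    exact ENNReal.ofReal_pos.mp hp
  have hrδ : b' - a < δ := by
    have hlt : ENNReal.ofReal (b' - a) < ENNReal.ofReal (δ / 2) := by
      rw [← hvol]; exact lt_of_lt_of_le hn.2 hninv
    have := (ENNReal.ofReal_lt_ofReal_iff (by linarith)).mp hlt
    linarith
  have hsub : J n ⊆ Metric.closedBall x (b' - a) := by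
    rw [hEq, Real.closedBall_eq_Icc]
    exact Icc_subset_Icc (by linarith [hxmem.1, hxmem.2]) (by linarith [hxmem.1, hxmem.2])
  have hmain : volume (Aᶜ ∩ J n) ≤ (2 * ε') * volume (J n) := by
    calc volume (Aᶜ ∩ J n) ≤ volume (Aᶜ ∩ Metric.closedBall x (b' - a)) :=
          measure_mono (inter_subset_inter_right _ hsub)
      _ ≤ ε' * volume (Metric.closedBall x (b' - a)) := key _ hrpos hrδ
      _ = (2 * ε') * volume (J n) := by
          rw [Real.volume_closedBall, hvol, ENNReal.ofReal_mul (by norm_num : (0:ℝ) ≤ 2),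
            ENNReal.ofReal_ofNat]
          ring
  have hr2 : volume (Aᶜ ∩ J n) / volume (J n) ≤ 2 * ε' := ENNReal.div_le_of_le_mul hmain
  have htop : (2 * ε') ≠ ∞ :=
    ENNReal.mul_ne_top (by simp) ENNReal.ofReal_ne_top
  calc ratioSeq Aᶜ J n ≤ (2 * ε').toReal := ENNReal.toReal_mono htop hr2
    _ = ε := by
        rw [hε'def, ENNReal.toReal_mul, ENNReal.toReal_ofReal (by linarith)]
        norm_num
        ring

lemma sparse_of_density {A : Set ℝ} (hA : MeasurableSet A) {x : ℝ}
    (hx : Filter.Tendsto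
      (fun r => volume (A ∩ Metric.closedBall x r) / volume (Metric.closedBall x r))
      (nhdsWithin 0 (Ioi 0)) (nhds 1)) :
    ISparseAt I Aᶜ x := by
  intro B hB hBlt C hC
  have hnull : volume (C \ Aᶜ) = 0 := hC.2.2 _ (hC.1.diff hA.compl) Subset.rfl
  have hle : upperIDensity I x (C ∪ B) ≤ upperIDensity I x B := by
    refine Real.sSup_le ?_ (uD_nonneg I x B)
    rintro l ⟨J, hJ, rfl⟩
    refine my_le_of_forall_pos (fun ε hε => ?_)
    have hev1 := eventually_ratio_compl_small I hA hx hJ (half_pos hε)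
    have hlimB : Filter.limsup (ratioSeq B J) I.filter ≤ upperIDensity I x B :=
      le_csSup (bddAbove_S I x B) ⟨J, hJ, rfl⟩
    have hev2 : ∀ᶠ n in I.filter, ratioSeq B J n < upperIDensity I x B + ε / 2 :=
      Filter.eventually_lt_of_limsup_lt (lt_of_le_of_lt hlimB (by linarith)) (isBounded I B J)
    refine Filter.limsup_le_of_le (isCobounded I _ J) ?_
    filter_upwards [hev1, hev2] with n h1 h2
    have hp1 : ratioSeq (C ∪ B) J n ≤ ratioSeq (Aᶜ ∪ B) J n := by
      refine ratio_mono_null ?_ J n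
      refine measure_mono_null ?_ hnull
      rintro y ⟨hy1, hy2⟩
      rcases hy1 with h | h
      · exact ⟨h, fun hAc => hy2 (Or.inl hAc)⟩
      · exact absurd (Or.inr h) hy2
    have hp2 := ratio_union_le Aᶜ B J n
    linarith
  exact lt_of_le_of_lt hle hBlt

lemma bad_null {A : Set ℝ} (hA : MeasurableSet A) :
    volume {x | x ∈ A ∧ ¬ ISparseAt I Aᶜ x} = 0 := by
  have h := Besicovitch.ae_tendsto_measure_inter_div volume A
  rw [MeasureTheory.ae_iff] at h
  obtain ⟨t, hsub, htm, ht0⟩ := exists_measurable_superset_of_null h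
  rw [Measure.restrict_apply htm] at ht0
  refine measure_mono_null ?_ ht0
  rintro y ⟨hyA, hyns⟩
  exact ⟨hsub (fun htd => hyns (sparse_of_density I hA htd)), hyA⟩

end SparseHelpers

/-- For measurable `A`, the set `G = {x ∈ A : ℝ \ A ∈ S_I(x)}` is the interior of
`A` in the I-sparse set topology. -/
theorem sparseTop_interior (I : AdmissibleIdeal) (A : Set ℝ) (hA : MeasurableSet A) :
    {x ∈ A | ISparseAt I Aᶜ x} ∈ sparseTop I ∧
    {x ∈ A | ISparseAt I Aᶜ x} ⊆ A ∧
    ∀ V ∈ sparseTop I, V ⊆ A → V ⊆ {x ∈ A | ISparseAt I Aᶜ x} := by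
  set G := {x ∈ A | ISparseAt I Aᶜ x} with hGdef
  have hbad : volume (A \ G) = 0 := by
    refine measure_mono_null ?_ (SparseHelpers.bad_null I hA)
    rintro y ⟨hyA, hyG⟩
    exact ⟨hyA, fun hs => hyG ⟨hyA, hs⟩⟩
  refine ⟨?_, fun y hy => hy.1, ?_⟩
  · intro x hx B hB hBlt C hC
    have hAC : IsMeasurableCover C Aᶜ := by
      refine ⟨hC.1, fun y hy => hC.2.1 (fun hyG => hy hyG.1), ?_⟩
      intro F hF hFsub
      set N := toMeasurable volume (A \ G) with hNdef
      have hN0 : volume N = 0 := by rw [hNdef, measure_toMeasurable]; exact hbad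
      have h1 : volume (F \ N) = 0 := by
        refine hC.2.2 _ (hF.diff (measurableSet_toMeasurable _ _)) ?_
        rintro y ⟨hyF, hyN⟩
        have hyC := (hFsub hyF).1
        have hyA : y ∈ A := by by_contra hns; exact (hFsub hyF).2 hns
        exact ⟨hyC, fun hyGc => hyN (subset_toMeasurable _ _ ⟨hyA, hyGc⟩)⟩
      have h2 : volume F ≤ volume (F \ N) + volume N := by
        refine le_trans (measure_mono ?_) (measure_union_le _ _)
        intro y hy
        by_cases h : y ∈ N
        · exact Or.inr h
        · exact Or.inl ⟨hy, h⟩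
      rw [h1, hN0, add_zero] at h2
      exact le_antisymm h2 zero_le
    exact hx.2 B hB hBlt C hAC
  · intro V hV hVA x hxV
    refine ⟨hVA hxV, ?_⟩
    intro B hB hBlt C hC
    have hsp := hV x hxV
    set T := toMeasurable volume Vᶜ with hTdef
    have hcov : IsMeasurableCover (C ∪ T) Vᶜ := by
      refine ⟨hC.1.union (measurableSet_toMeasurable _ _),
        fun y hy => Or.inr (subset_toMeasurable _ _ hy), ?_⟩
      intro F hF hFsub
      have h1 : volume (F ∩ T) = 0 := by
        have hempty : Vᶜ ∩ F = ∅ := by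
          refine eq_empty_iff_forall_notMem.mpr ?_
          rintro y ⟨h1c, h2c⟩
          exact (hFsub h2c).2 h1c
        rw [inter_comm, hTdef, Measure.measure_toMeasurable_inter_of_sFinite hF Vᶜ, hempty,
          measure_empty]
      have h2 : volume (F \ T) = 0 := by
        refine hC.2.2 _ (hF.diff (measurableSet_toMeasurable _ _)) ?_
        rintro y ⟨hyF, hyT⟩
        rcases (hFsub hyF).1 with h | h
        · exact ⟨h, fun hyAc => hyT (subset_toMeasurable _ _ (fun hyV => hyAc (hVA hyV)))⟩
        · exact absurd h hyT
      have h3 : volume F ≤ volume (F \ T) + volume (F ∩ T) := by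
        refine le_trans (measure_mono ?_) (measure_union_le _ _)
        intro y hy
        by_cases h : y ∈ T
        · exact Or.inr ⟨hy, h⟩
        · exact Or.inl ⟨hy, h⟩
      rw [h2, h1, add_zero] at h3
      exact le_antisymm h3 zero_le
    have hlt := hsp B hB hBlt (C ∪ T) hcov
    refine lt_of_le_of_lt ?_ hlt
    refine SparseHelpers.uD_mono_null I ?_ x
    have hdiff : (C ∪ B) \ ((C ∪ T) ∪ B) = ∅ := by
      refine eq_empty_iff_forall_notMem.mpr ?_
      rintro y ⟨hy1, hy2⟩
      rcases hy1 with h | h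
      · exact hy2 (Or.inl (Or.inl h))
      · exact hy2 (Or.inr h)
    rw [hdiff]
    exact measure_empty
end
end
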